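/- Let G be a connected graph with no induced K_{1,3} and no induced hammer containing an induced path P on n ≥ 6 vertices of maximal length among induced paths, and suppose some end of P has a neighbor x outside P. Then x is adjacent to at least two vertices of P. -/

import Mathlib

open SimpleGraph

def hammer : SimpleGraph (Fin 5) :=
  SimpleGraph.fromEdgeSet {s(0, 1), s(0, 2), s(1, 2), s(0, 3), s(3, 4)}

lemma extend_path {V : Type*} {G : SimpleGraph V} {n : ℕ} (hn : 1 ≤ n)
    (f : pathGraph n ↪g G) (x : V) (hx : x ∉ Set.range f)
    (hadj : G.Adj x (f ⟨0, hn⟩))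
    (huniq : ∀ i : Fin n, G.Adj x (f i) → i.val = 0) :
    Nonempty (pathGraph (n + 1) ↪g G) := by
  refine ⟨⟨⟨fun i => if h : (i : ℕ) = 0 then x else f ⟨i - 1, by omega⟩, ?_⟩, ?_⟩⟩
  · intro i j hij
    simp only at hij
    by_cases hi : (i : ℕ) = 0 <;> by_cases hj : (j : ℕ) = 0 <;>
      simp only [hi, hj, dif_pos, dif_neg, dite_true, dite_false] at hij
    · exact Fin.ext (by omega)
    · exact absurd ⟨_, hij.symm⟩ hx
    · exact absurd ⟨_, hij⟩ hx
    · have h2 : ((⟨(i:ℕ) - 1, by omega⟩ : Fin n) : ℕ) = ((⟨(j:ℕ) - 1, by omega⟩ : Fin n) : ℕ) :=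
        congrArg Fin.val (f.injective hij)
      simp only at h2
      exact Fin.ext (by omega)
  · intro i j
    show G.Adj (if h : (i : ℕ) = 0 then x else f ⟨i - 1, by omega⟩) (if h : (j : ℕ) = 0 then x else f ⟨j - 1, by omega⟩) ↔ _
    by_cases hi : (i : ℕ) = 0 <;> by_cases hj : (j : ℕ) = 0 <;>
      simp only [hi, hj, dif_pos, dif_neg, dite_true, dite_false]
    · constructor
      · intro h; exact absurd rfl h.ne
      · intro h; rw [pathGraph_adj] at h; omega
    · constructor
      · intro h
        have := huniq _ h
        rw [pathGraph_adj]; simp only at this ⊢; omega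
      · intro h
        rw [pathGraph_adj] at h
        have hj1 : (j : ℕ) - 1 = 0 := by omega
        convert hadj using 2
        exact Fin.ext hj1
    · constructor
      · intro h
        have := huniq _ h.symm
        rw [pathGraph_adj]; simp only at this ⊢; omega
      · intro h
        rw [pathGraph_adj] at h
        have hi1 : (i : ℕ) - 1 = 0 := by omega
        have : f ⟨(i:ℕ) - 1, by omega⟩ = f ⟨0, hn⟩ := by congr 1; exact Fin.ext hi1
        rw [this]; exact hadj.symm
    · rw [f.map_adj_iff, pathGraph_adj, pathGraph_adj]
      simp only
      omega

theorem claw_hammer_free_longest_path_end {V : Type*} (G : SimpleGraph V)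
    (hconn : G.Connected)
    (hclaw : ¬ Nonempty (completeBipartiteGraph (Fin 1) (Fin 3) ↪g G))
    (hham : ¬ Nonempty (hammer ↪g G))
    (n : ℕ) (hn : 6 ≤ n) (f : pathGraph n ↪g G)
    (hmax : ∀ m : ℕ, Nonempty (pathGraph m ↪g G) → m ≤ n)
    (x : V) (hx : x ∉ Set.range f)
    (hend : G.Adj x (f ⟨0, by omega⟩) ∨ G.Adj x (f ⟨n - 1, by omega⟩)) :
    ∃ u w : V, u ≠ w ∧ u ∈ Set.range f ∧ w ∈ Set.range f ∧ G.Adj x u ∧ G.Adj x w := by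
  by_contra hcon
  push_neg at hcon
  have hn1 : 1 ≤ n := by omega
  -- reversal embedding
  let rev : pathGraph n ↪g G :=
    ⟨⟨fun i => f ⟨n - 1 - i, by omega⟩, by
        intro i j hij
        have h2 : ((⟨n - 1 - (i:ℕ), by omega⟩ : Fin n) : ℕ) = ((⟨n - 1 - (j:ℕ), by omega⟩ : Fin n) : ℕ) :=
          congrArg Fin.val (f.injective hij)
        simp only at h2
        exact Fin.ext (by omega)⟩, by
      intro i j
      show G.Adj (f ⟨n - 1 - i, by omega⟩) (f ⟨n - 1 - j, by omega⟩) ↔ _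
      rw [f.map_adj_iff, pathGraph_adj, pathGraph_adj]
      simp only
      omega⟩
  have hrange : Set.range rev = Set.range f := by
    ext v
    constructor
    · rintro ⟨i, rfl⟩; exact ⟨_, rfl⟩
    · rintro ⟨i, rfl⟩
      exact ⟨⟨n - 1 - i, by omega⟩,
        congrArg f (Fin.ext (by simp only; omega))⟩
  obtain ⟨g, hg0, hgr⟩ : ∃ g : pathGraph n ↪g G, G.Adj x (g ⟨0, hn1⟩) ∧ Set.range g = Set.range f := by
    rcases hend with h | h
    · exact ⟨f, by convert h using 2, rfl⟩
    · refine ⟨rev, ?_, hrange⟩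
      show G.Adj x (f ⟨n - 1 - ((⟨0, hn1⟩ : Fin n) : ℕ), by omega⟩)
      have he : (⟨n - 1 - ((⟨0, hn1⟩ : Fin n) : ℕ), by omega⟩ : Fin n) = ⟨n - 1, by omega⟩ :=
        Fin.ext (by simp)
      rw [he]; exact h
  have huniq : ∀ i : Fin n, G.Adj x (g i) → i.val = 0 := by
    intro i hi
    by_contra hi0
    have hne : g i ≠ g ⟨0, hn1⟩ := fun h => hi0 (congrArg Fin.val (g.injective h))
    exact hcon (g i) (g ⟨0, hn1⟩) hne (hgr ▸ ⟨i, rfl⟩) (hgr ▸ ⟨_, rfl⟩) hi hg0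
  have := hmax (n + 1) (extend_path hn1 g x (hgr ▸ hx) hg0 huniq)
  omega
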